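/- Let ψ : ℝ → ℝ be continuous and strictly monotone increasing on (0, ∞), with ψ(x) → −∞ as x → 0⁺, and interval integrable on [0, 1]. Define H(p) = ∫_1^p ψ(t) dt for p ≥ 0, and for a nonempty finite set 𝒯, D(x, y) = Σ_τ [H(x_τ) − H(y_τ) − ψ(y_τ)(x_τ − y_τ)]. Let r : 𝒯 → ℝ, β > 0, and π_ref : 𝒯 → ℝ with π_ref(τ) > 0 for all τ. Then the objective f(π) = Σ_τ π_τ r(τ) − β D(π, π_ref) is strictly concave on the nonnegative orthant {x : 𝒯 → ℝ | x_τ ≥ 0 for all τ}. -/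

import Mathlib

/-- The regularized preference-optimization objective
f(π) = Σ_τ π_τ r(τ) − β D(π, π_ref), where D is the Bregman divergence induced by the
mirror map built from ψ, is strictly concave on the nonnegative orthant. -/
theorem objective_strictConcaveOn_orthant
    {𝒯 : Type*} [Fintype 𝒯] [Nonempty 𝒯]
    (ψ : ℝ → ℝ)
    (hψcont : ContinuousOn ψ (Set.Ioi (0 : ℝ)))
    (hψmono : StrictMonoOn ψ (Set.Ioi (0 : ℝ)))
    (hψtend : Filter.Tendsto ψ (nhdsWithin 0 (Set.Ioi (0 : ℝ))) Filter.atBot)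
    (hψint : IntervalIntegrable ψ MeasureTheory.volume 0 1)
    (H : ℝ → ℝ) (hH : ∀ p : ℝ, 0 ≤ p → H p = ∫ t in (1 : ℝ)..p, ψ t)
    (D : (𝒯 → ℝ) → (𝒯 → ℝ) → ℝ)
    (hD : ∀ x y : 𝒯 → ℝ, D x y = ∑ τ, (H (x τ) - H (y τ) - ψ (y τ) * (x τ - y τ)))
    (r : 𝒯 → ℝ) (β : ℝ) (hβ : 0 < β)
    (πref : 𝒯 → ℝ) (hrefpos : ∀ τ, 0 < πref τ)
    (f : (𝒯 → ℝ) → ℝ)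
    (hf : ∀ π : 𝒯 → ℝ, f π = ∑ τ, π τ * r τ - β * D π πref) :
    StrictConcaveOn ℝ {x : 𝒯 → ℝ | ∀ τ, 0 ≤ x τ} f := by
  -- derivative of the primitive at positive points
  have hderiv : ∀ p : ℝ, 0 < p → HasDerivAt H (ψ p) p := by
    intro p hp
    have hsub : Set.uIcc (1 : ℝ) p ⊆ Set.Ioi 0 := by
      intro t ht
      rcases ht with ⟨h1, h2⟩
      have : (0 : ℝ) < min 1 p := lt_min one_pos hp
      exact lt_of_lt_of_le this h1
    have hint : IntervalIntegrable ψ MeasureTheory.volume 1 p :=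
      (hψcont.mono hsub).intervalIntegrable
    have hmeas : StronglyMeasurableAtFilter ψ (nhds p) MeasureTheory.volume :=
      hψcont.stronglyMeasurableAtFilter isOpen_Ioi p hp
    have hca : ContinuousAt ψ p :=
      hψcont.continuousAt (Ioi_mem_nhds hp)
    have h1 : HasDerivAt (fun q => ∫ t in (1:ℝ)..q, ψ t) (ψ p) p :=
      intervalIntegral.integral_hasDerivAt_right hint hmeas hca
    refine h1.congr_of_eventuallyEq ?_
    filter_upwards [Ioi_mem_nhds hp] with q hq
    exact hH q (le_of_lt hq)
  -- continuity of H on [0, ∞)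
  have hHcont : ContinuousOn H (Set.Ici 0) := by
    have hprim : ContinuousOn (fun q => ∫ t in (1:ℝ)..q, ψ t) (Set.uIcc (0:ℝ) 1) :=
      intervalIntegral.continuousOn_primitive_interval' hψint (by
        simp [Set.uIcc_of_le (zero_le_one)])
    intro p hp
    rcases eq_or_lt_of_le (Set.mem_Ici.mp hp : (0:ℝ) ≤ p) with h0 | h0
    · -- p = 0
      have h01 : (0:ℝ) ∈ Set.uIcc (0:ℝ) 1 := Set.left_mem_uIcc
      have hcw : ContinuousWithinAt (fun q => ∫ t in (1:ℝ)..q, ψ t) (Set.uIcc (0:ℝ) 1) p := by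
        rw [← h0]; exact hprim 0 h01
      have hmem : Set.uIcc (0:ℝ) 1 ∈ nhdsWithin p (Set.Ici 0) := by
        rw [Set.uIcc_of_le zero_le_one, ← h0]
        have : Set.Icc (0:ℝ) 1 = Set.Ici 0 ∩ Set.Iic 1 := (Set.Ici_inter_Iic).symm
        rw [this]
        exact Filter.inter_mem self_mem_nhdsWithin
          (nhdsWithin_le_nhds (Iic_mem_nhds one_pos))
      have := (hcw.mono_of_mem_nhdsWithin hmem)
      refine this.congr ?_ ?_
      · intro q hq; exact hH q hq
      · rw [← h0]; exact hH 0 le_rfl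
    · exact ((hderiv p h0).continuousAt).continuousWithinAt
  -- strict convexity of H on [0, ∞)
  have hHconv : StrictConvexOn ℝ (Set.Ici 0) H := by
    apply StrictMonoOn.strictConvexOn_of_deriv (convex_Ici 0) hHcont
    rw [interior_Ici]
    intro p hp q hq hpq
    rw [(hderiv p hp).deriv, (hderiv q hq).deriv]
    exact hψmono hp hq hpq
  -- rewrite f
  have hfz : ∀ π : 𝒯 → ℝ, f π = (∑ τ, π τ * r τ) -
      β * ((∑ τ, H (π τ)) - (∑ τ, H (πref τ)) - (∑ τ, ψ (πref τ) * (π τ - πref τ))) := by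
    intro π
    rw [hf, hD, Finset.sum_sub_distrib, Finset.sum_sub_distrib]
  constructor
  · intro x hx y hy a b ha hb hab τ
    exact add_nonneg (mul_nonneg ha (hx τ)) (mul_nonneg hb (hy τ))
  · intro x hx y hy hxy a b ha hb hab
    obtain ⟨τ0, hτ0⟩ := Function.ne_iff.mp hxy
    have hz : ∀ τ, (a • x + b • y) τ = a * x τ + b * y τ := fun τ => rfl
    -- strict convexity of the sum of H's
    have hsum : ∑ τ, H ((a • x + b • y) τ) <
        a * ∑ τ, H (x τ) + b * ∑ τ, H (y τ) := by
      rw [Finset.mul_sum, Finset.mul_sum, ← Finset.sum_add_distrib]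
      apply Finset.sum_lt_sum
      · intro τ _
        have := hHconv.convexOn.2 (hx τ) (hy τ) ha.le hb.le hab
        simpa [hz, smul_eq_mul] using this
      · refine ⟨τ0, Finset.mem_univ _, ?_⟩
        have := hHconv.2 (hx τ0) (hy τ0) hτ0 ha hb hab
        simpa [hz, smul_eq_mul] using this
    -- linear parts combine exactly
    have h1 : ∑ τ, (a • x + b • y) τ * r τ =
        a * ∑ τ, x τ * r τ + b * ∑ τ, y τ * r τ := by
      rw [Finset.mul_sum, Finset.mul_sum, ← Finset.sum_add_distrib]
      exact Finset.sum_congr rfl fun τ _ => by rw [hz]; ring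
    have h2 : ∑ τ, ψ (πref τ) * ((a • x + b • y) τ - πref τ) =
        a * ∑ τ, ψ (πref τ) * (x τ - πref τ) + b * ∑ τ, ψ (πref τ) * (y τ - πref τ) := by
      rw [Finset.mul_sum, Finset.mul_sum, ← Finset.sum_add_distrib]
      refine Finset.sum_congr rfl fun τ _ => ?_
      rw [hz]
      have : a * x τ + b * y τ - πref τ
          = a * (x τ - πref τ) + b * (y τ - πref τ) := by
        have : a * πref τ + b * πref τ = πref τ := by
          rw [← add_mul, hab, one_mul]
        linarith
      rw [this]; ring
    have key := mul_lt_mul_of_pos_left hsum hβ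
    simp only [smul_eq_mul]
    rw [hfz, hfz, hfz, h1, h2]
    have hab' : b = 1 - a := by linarith
    subst hab'
    nlinarith [key]
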